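/- arXiv:2310.13655 — 2 statements merged into one kernel-verified Lean document; each statement's English description precedes it below -/
import Mathlib

section
/- Let M : ℝ → Matrix (Fin n) (Fin n) ℝ be a differentiable family of symmetric positive definite matrices and μ > 0 such that -μ·M(θ) ≼ M'(θ) ≼ μ·M(θ) (in the Loewner order) for all θ. Then for every fixed vector v and every θ with vᵀM(θ)v > 0, the function θ ↦ log(vᵀM(θ)v) has derivative bounded in absolute value by μ. -/
open Matrix

/-- Entrywise derivative of a matrix-valued function. -/
noncomputable def matDeriv {n : ℕ} (M : ℝ → Matrix (Fin n) (Fin n) ℝ) (θ : ℝ) :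
    Matrix (Fin n) (Fin n) ℝ :=
  Matrix.of fun i j => deriv (fun t => M t i j) θ

theorem loewner_deriv_bound_implies_log_grad_bound {n : ℕ}
    (M : ℝ → Matrix (Fin n) (Fin n) ℝ) (μ : ℝ) (hμ : 0 < μ)
    (hdiff : ∀ i j : Fin n, Differentiable ℝ fun θ => M θ i j)
    (hpd : ∀ θ : ℝ, (M θ).PosDef)
    (hub : ∀ θ : ℝ, (μ • M θ - matDeriv M θ).PosSemidef)
    (hlb : ∀ θ : ℝ, (matDeriv M θ + μ • M θ).PosSemidef) :
    ∀ (v : Fin n → ℝ) (θ : ℝ), 0 < v ⬝ᵥ (M θ).mulVec v →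
      |deriv (fun t => Real.log (v ⬝ᵥ (M t).mulVec v)) θ| ≤ μ := by
  intro v θ hf
  have hfeq : (fun t => v ⬝ᵥ (M t).mulVec v)
      = fun t => ∑ i, ∑ j, v i * M t i j * v j := by
    funext t
    simp [dotProduct, Matrix.mulVec, Finset.mul_sum, mul_assoc]
  have hderiv : HasDerivAt (fun t => v ⬝ᵥ (M t).mulVec v)
      (v ⬝ᵥ (matDeriv M θ).mulVec v) θ := by
    rw [hfeq]
    have h2 : v ⬝ᵥ (matDeriv M θ).mulVec v
        = ∑ i, ∑ j, v i * deriv (fun t => M t i j) θ * v j := by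
      simp [matDeriv, dotProduct, Matrix.mulVec, Finset.mul_sum, mul_assoc]
    rw [h2]
    exact HasDerivAt.fun_sum fun i _ => HasDerivAt.fun_sum fun j _ =>
      ((((hdiff i j) θ).hasDerivAt.const_mul (v i)).mul_const (v j))
  -- bound on the derivative of the quadratic form
  have hub' : v ⬝ᵥ (matDeriv M θ).mulVec v ≤ μ * (v ⬝ᵥ (M θ).mulVec v) := by
    have h := (hub θ).dotProduct_mulVec_nonneg v
    simp only [star_trivial, Matrix.sub_mulVec, Matrix.smul_mulVec,
      dotProduct_sub, dotProduct_smul, smul_eq_mul] at h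
    linarith
  have hlb' : -(μ * (v ⬝ᵥ (M θ).mulVec v)) ≤ v ⬝ᵥ (matDeriv M θ).mulVec v := by
    have h := (hlb θ).dotProduct_mulVec_nonneg v
    simp only [star_trivial, Matrix.add_mulVec, Matrix.smul_mulVec,
      dotProduct_add, dotProduct_smul, smul_eq_mul] at h
    linarith
  have hlog : HasDerivAt (fun t => Real.log (v ⬝ᵥ (M t).mulVec v))
      (v ⬝ᵥ (matDeriv M θ).mulVec v / (v ⬝ᵥ (M θ).mulVec v)) θ :=
    hderiv.log (ne_of_gt hf)
  rw [hlog.deriv, abs_div, abs_of_pos hf, div_le_iff₀ hf, abs_le]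
  constructor <;> nlinarith [abs_nonneg (v ⬝ᵥ (matDeriv M θ).mulVec v),
    le_abs_self (v ⬝ᵥ (matDeriv M θ).mulVec v),
    neg_abs_le (v ⬝ᵥ (matDeriv M θ).mulVec v)]
end

section
/- Let E : ℝ → ℝ be differentiable and nonnegative with E'(t) ≤ -ρ̄·E(t) + α²·|θ̃(t)|² where ρ̄ > 0, α ≥ 0, and θ̃ : ℝ → ℝᵖ is continuous with θ̃(t) → 0 as t → ∞. Then E(t) → 0 as t → ∞. -/
open Filter Real Set Topology

theorem energy_tendsto_zero_of_estimation_error_tendsto_zero {p : ℕ}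
    (E : ℝ → ℝ) (θt : ℝ → EuclideanSpace ℝ (Fin p)) (ρbar α : ℝ)
    (hE : Differentiable ℝ E) (hEnn : ∀ t : ℝ, 0 ≤ E t)
    (hρ : 0 < ρbar) (hα : 0 ≤ α)
    (hθc : Continuous θt) (hθ0 : Tendsto θt atTop (nhds 0))
    (hineq : ∀ t : ℝ, deriv E t ≤ -ρbar * E t + α ^ 2 * ‖θt t‖ ^ 2) :
    Tendsto E atTop (nhds 0) := by
  rw [Metric.tendsto_atTop]
  intro ε hε
  have hc : (0:ℝ) < ρbar * ε / 4 := by positivity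
  have h1 : Tendsto (fun t => α ^ 2 * ‖θt t‖ ^ 2) atTop (nhds 0) := by
    have := (hθ0.norm.pow 2).const_mul (α ^ 2)
    simpa using this
  obtain ⟨T, hT⟩ := (h1.eventually (ge_mem_nhds hc)).exists_forall_of_atTop
  set c : ℝ := ρbar * ε / 4 with hcdef
  have key : ∀ b ≥ T, E b ≤ E T * exp (-ρbar * (b - T)) + ε / 4 := by
    intro b hb
    have hgb := le_gronwallBound_of_liminf_deriv_right_le (f := E) (f' := deriv E)
      (δ := E T) (K := -ρbar) (ε := c) (a := T) (b := b)
      (hE.continuous.continuousOn)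
      (fun x _ r hr => by
        have hd : Tendsto (slope E x) (𝓝[≠] x) (nhds (deriv E x)) :=
          hasDerivAt_iff_tendsto_slope.mp (hE x).hasDerivAt
        have hd' : Tendsto (slope E x) (𝓝[>] x) (nhds (deriv E x)) :=
          hd.mono_left (nhdsWithin_mono x fun z hz => ne_of_gt hz)
        have hev : ∀ᶠ z in 𝓝[>] x, slope E x z < r :=
          hd'.eventually (Filter.Tendsto.eventually_lt_const hr tendsto_id)
        refine hev.frequently.mono fun z hz => ?_
        simpa [slope_def_field, div_eq_inv_mul] using hz)
      le_rfl
      (fun x hx => by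
        have h2 : α ^ 2 * ‖θt x‖ ^ 2 ≤ c := hT x hx.1
        have := hineq x
        linarith)
    have hb' := hgb b ⟨hb, le_rfl⟩
    rw [gronwallBound_of_K_ne_0 (by linarith : -ρbar ≠ 0)] at hb'
    have hexp : exp (-ρbar * (b - T)) ≤ 1 := by
      apply exp_le_one_iff.mpr
      nlinarith [sub_nonneg.mpr hb]
    have h5 : c / -ρbar * (exp (-ρbar * (b - T)) - 1) ≤ ε / 4 := by
      have h3 : c / -ρbar = -(ε / 4) := by
        rw [hcdef]; field_simp
      rw [h3]
      nlinarith [exp_pos (-ρbar * (b - T))]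
    linarith
  have hterm : Tendsto (fun b => E T * exp (-ρbar * (b - T))) atTop (nhds 0) := by
    have hlin : Tendsto (fun b : ℝ => -ρbar * (b - T)) atTop atBot := by
      have := (tendsto_atTop_add_const_right atTop (-T) (tendsto_id (α := ℝ)))
      exact this.const_mul_atTop_of_neg (neg_lt_zero.mpr hρ) |>.congr (fun b => by simp only [id_eq]; ring)
    simpa using (tendsto_exp_atBot.comp hlin).const_mul (E T)
  obtain ⟨T₂, hT₂⟩ := eventually_atTop.mp
    (hterm.eventually (Filter.Tendsto.eventually_lt_const (by positivity : (0:ℝ) < ε/2) tendsto_id))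
  refine ⟨max T T₂, fun b hb => ?_⟩
  have h4 := key b (le_trans (le_max_left _ _) hb)
  have h5 := hT₂ b (le_trans (le_max_right _ _) hb)
  simp only [id_eq] at h5
  rw [Real.dist_eq, sub_zero, abs_of_nonneg (hEnn b)]
  linarith
end
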